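/- Let P be a full rook placement on a Ferrers board F and let S = S(P,F). If the pair (F,S) satisfies the 312-conditions, then the pair (F,S^+) satisfies the 231-conditions. -/

import Mathlib

/-!
Common definitions: Ferrers boards, rook placements, pattern avoidance,
following Bloom–Saracino, "A Simple Bijection Between 231-Avoiding and
312-Avoiding Placements".

A square of the `n × n` array `𝒜` is recorded by the pair
`(column index, row index)` (0-based), i.e. the square `(c, r)` is the unit
square with SW corner `(c, r)` and NE corner `(c+1, r+1)`.
-/

/-- A square of the grid, given by its (column index, row index), both 0-based. -/
abbrev Square : Type := ℕ × ℕ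

/-- For a vertex `V = (a, b)`, `RV V` is the set of squares of the rectangle `R(V)`
bounded by the lines `x = 0`, `x = a`, `y = 0`, `y = b`: all squares with column
index `< a` and row index `< b`. -/
def RV (V : ℕ × ℕ) : Finset Square := Finset.range V.1 ×ˢ Finset.range V.2

/-- A Ferrers board contained in the `n × n` array `𝒜`: a set of squares such that
`R(V) ⊆ F` for every vertex `V` of `F`, i.e. a downward- and leftward-closed set
of squares. -/
structure FerrersBoard (n : ℕ) where
  squares : Finset Square
  inArray : ∀ s ∈ squares, s.1 < n ∧ s.2 < n
  closed : ∀ s ∈ squares, ∀ t : Square, t.1 ≤ s.1 → t.2 ≤ s.2 → t ∈ squares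

namespace FerrersBoard

variable {n : ℕ}

/-- The number of squares in column `c` of `F`. -/
def colHeight (F : FerrersBoard n) (c : ℕ) : ℕ :=
  (F.squares.filter fun s => s.1 = c).card

/-- The number of squares in row `r` of `F`. -/
def rowWidth (F : FerrersBoard n) (r : ℕ) : ℕ :=
  (F.squares.filter fun s => s.2 = r).card

/-- The length of the longest row of `F` (the bottom row, by closedness),
i.e. the number of nonempty columns of `F`. -/
def width (F : FerrersBoard n) : ℕ := F.rowWidth 0

/-- The length of the longest column of `F` (the leftmost column, by closedness),
i.e. the number of nonempty rows of `F`. -/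
def height (F : FerrersBoard n) : ℕ := F.colHeight 0

/-- `V` is a vertex of `F`, i.e. a corner of one of the squares of `F`. -/
def IsVertex (F : FerrersBoard n) (V : ℕ × ℕ) : Prop :=
  ∃ s ∈ F.squares, (V.1 = s.1 ∨ V.1 = s.1 + 1) ∧ (V.2 = s.2 ∨ V.2 = s.2 + 1)

/-- `V = (a, b)` lies on the right/up border of `F` (the border of `F` excluding
its vertical left-hand side and horizontal bottom): this border is the staircase
lattice path from the top-left corner `(0, height F)` down to `(width F, 0)`, and
its vertices are exactly those `(a, b)` with `a ≤ width F` and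
`colHeight a ≤ b ≤ colHeight (a - 1)` (where for `a = 0` truncated subtraction
makes the condition read `b = height F`). -/
def IsBorderVertex (F : FerrersBoard n) (V : ℕ × ℕ) : Prop :=
  V.1 ≤ F.width ∧ F.colHeight V.1 ≤ V.2 ∧ V.2 ≤ F.colHeight (V.1 - 1)

/-- `V1, V2` are `F`-diagonal vertices: both lie on the right/up border of `F`
and they are the left and right ends of a diagonal of slope `-1` lying entirely
within `F` (the diagonal from `V1 = (a, b)` to `V2 = (a + k, b - k)` passes, for
each `0 ≤ i < k`, through the square with column `a + i` and row `b - i - 1`,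
and all these squares must belong to `F`). -/
def DiagonalVertices (F : FerrersBoard n) (V1 V2 : ℕ × ℕ) : Prop :=
  F.IsBorderVertex V1 ∧ F.IsBorderVertex V2 ∧
    ∃ k : ℕ, V2.1 = V1.1 + k ∧ V1.2 = V2.2 + k ∧
      ∀ i < k, (V1.1 + i, V2.2 + (k - 1 - i)) ∈ F.squares

end FerrersBoard

/-- `V1` is directly to the left of `V2`. -/
def LeftOf (V1 V2 : ℕ × ℕ) : Prop := V2.1 = V1.1 + 1 ∧ V2.2 = V1.2

/-- `V1` is directly below `V2`. -/
def Below (V1 V2 : ℕ × ℕ) : Prop := V2.1 = V1.1 ∧ V2.2 = V1.2 + 1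

/-- `P` is a rook placement on the Ferrers board `F`: a subset of `F` containing
at most one square (marker) from each column and at most one from each row. -/
def IsRookPlacement {n : ℕ} (F : FerrersBoard n) (P : Finset Square) : Prop :=
  P ⊆ F.squares ∧ (∀ x ∈ P, ∀ y ∈ P, x.1 = y.1 → x = y) ∧
    (∀ x ∈ P, ∀ y ∈ P, x.2 = y.2 → x = y)

/-- `P` is a full rook placement on `F`: a rook placement with exactly one marker
in each (nonempty) column and each (nonempty) row of `F`. -/
def IsFullPlacement {n : ℕ} (F : FerrersBoard n) (P : Finset Square) : Prop :=
  IsRookPlacement F P ∧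
    ∀ s ∈ F.squares, (∃ r, (s.1, r) ∈ P) ∧ (∃ c, (c, s.2) ∈ P)

/-- The set of markers `M` contains an occurrence of the pattern `τ ∈ S₃`:
three markers, listed with strictly increasing columns, whose rows are ordered
as the values of `τ`. -/
def ContainsPattern (M : Finset Square) (τ : Equiv.Perm (Fin 3)) : Prop :=
  ∃ m : Fin 3 → Square, (∀ i, m i ∈ M) ∧
    (∀ i j : Fin 3, i < j → (m i).1 < (m j).1) ∧
    (∀ i j : Fin 3, (m i).2 < (m j).2 ↔ τ i < τ j)

/-- The rook placement `P` on `F` avoids `τ`: for every vertex `V` on the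
right/up border of `F`, the restriction of `P` to `R(V)` (equivalently, the
permutation order-isomorphic to it) avoids `τ`. -/
def AvoidsOn {n : ℕ} (F : FerrersBoard n) (P : Finset Square)
    (τ : Equiv.Perm (Fin 3)) : Prop :=
  ∀ V : ℕ × ℕ, F.IsBorderVertex V → ¬ ContainsPattern (P ∩ RV V) τ

/-- The pattern 231 (in one-line notation), as a permutation of `Fin 3`. -/
def perm231 : Equiv.Perm (Fin 3) := ⟨![1, 2, 0], ![2, 0, 1], by decide, by decide⟩

/-- The pattern 312 (in one-line notation), as a permutation of `Fin 3`. -/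
def perm312 : Equiv.Perm (Fin 3) := ⟨![2, 0, 1], ![1, 2, 0], by decide, by decide⟩

/-- The maximal length of an increasing sequence of markers of `M`. -/
noncomputable def maxIncSeq (M : Finset Square) : ℕ :=
  sSup {k : ℕ | ∃ f : Fin k → Square, (∀ i, f i ∈ M) ∧
    ∀ i j : Fin k, i < j → (f i).1 < (f j).1 ∧ (f i).2 < (f j).2}

/-- `S(P, V)`: the maximal length of an increasing sequence of markers of `P`
inside the rectangle `R(V)`.  The function `fun V => SPV P V`, restricted to the
vertices of the right/up border of `F`, is the sequence `S(P, F)`. -/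
noncomputable def SPV (P : Finset Square) (V : ℕ × ℕ) : ℕ := maxIncSeq (P ∩ RV V)

/-- The `S ↦ S⁺` operation on `F`-sequences, relative to the function
`N = N(F, ·)` counting markers in rectangles: `S⁺(V) = 0` if `S V = 0`, and
`S⁺(V) = N V + 1 - S V` otherwise. -/
def plusSeq (N S : ℕ × ℕ → ℕ) : ℕ × ℕ → ℕ :=
  fun V => if S V = 0 then 0 else N V + 1 - S V

/-- The 231-conditions for the pair `(F, S)`: monotonicity, the 0-conditions and
the (231-)diagonal condition. -/
def Conditions231 {n : ℕ} (F : FerrersBoard n) (S : ℕ × ℕ → ℕ) : Prop :=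
  -- (i) monotonicity conditions
  (∀ V1 V2 : ℕ × ℕ, F.IsBorderVertex V1 → F.IsBorderVertex V2 →
    (LeftOf V1 V2 ∨ Below V1 V2) → S V1 ≤ S V2 ∧ S V2 ≤ S V1 + 1) ∧
  -- (ii) 0-conditions: first and last values are 0, no two consecutive 0s
  S (0, F.height) = 0 ∧ S (F.width, 0) = 0 ∧
  (∀ V1 V2 : ℕ × ℕ, F.IsBorderVertex V1 → F.IsBorderVertex V2 →
    (LeftOf V1 V2 ∨ Below V1 V2) → ¬(S V1 = 0 ∧ S V2 = 0)) ∧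
  -- (iii) diagonal condition
  (∀ V1 V2 : ℕ × ℕ, F.DiagonalVertices V1 V2 → S V1 ≤ S V2)

/-- The 312-conditions for the pair `(F, S)`: the same as the 231-conditions,
with the inequality in the diagonal condition reversed. -/
def Conditions312 {n : ℕ} (F : FerrersBoard n) (S : ℕ × ℕ → ℕ) : Prop :=
  (∀ V1 V2 : ℕ × ℕ, F.IsBorderVertex V1 → F.IsBorderVertex V2 →
    (LeftOf V1 V2 ∨ Below V1 V2) → S V1 ≤ S V2 ∧ S V2 ≤ S V1 + 1) ∧
  S (0, F.height) = 0 ∧ S (F.width, 0) = 0 ∧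
  (∀ V1 V2 : ℕ × ℕ, F.IsBorderVertex V1 → F.IsBorderVertex V2 →
    (LeftOf V1 V2 ∨ Below V1 V2) → ¬(S V1 = 0 ∧ S V2 = 0)) ∧
  (∀ V1 V2 : ℕ × ℕ, F.DiagonalVertices V1 V2 → S V2 ≤ S V1)

section AuxLemmas

open Finset

/-- A downward-closed finset of naturals is an initial segment. -/
lemma downward_closed_eq_range (s : Finset ℕ) (h : ∀ a ∈ s, ∀ b ≤ a, b ∈ s) :
    s = Finset.range s.card := by
  have hsub : s ⊆ Finset.range s.card := by
    intro x hx
    have hsr : Finset.range (x + 1) ⊆ s := by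
      intro y hy
      exact h x hx y (Nat.lt_succ_iff.mp (Finset.mem_range.mp hy))
    have := Finset.card_le_card hsr
    simp only [Finset.card_range] at this
    exact Finset.mem_range.mpr (by omega)
  exact Finset.eq_of_subset_of_card_le hsub (by simp)

lemma FerrersBoard.mem_iff_col {n : ℕ} (F : FerrersBoard n) (c r : ℕ) :
    (c, r) ∈ F.squares ↔ r < F.colHeight c := by
  classical
  set cs : Finset ℕ := (F.squares.filter fun s => s.1 = c).image Prod.snd with hcs
  have hmem : ∀ r' : ℕ, r' ∈ cs ↔ (c, r') ∈ F.squares := by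
    intro r'
    simp only [hcs, Finset.mem_image, Finset.mem_filter]
    constructor
    · rintro ⟨⟨c', r''⟩, ⟨hm, rfl⟩, rfl⟩; exact hm
    · intro h; exact ⟨(c, r'), ⟨h, rfl⟩, rfl⟩
  have hcard : cs.card = F.colHeight c := by
    rw [hcs]
    apply Finset.card_image_of_injOn
    intro x hx y hy hxy
    simp only [Finset.coe_filter, Set.mem_setOf_eq] at hx hy
    exact Prod.ext (hx.2.trans hy.2.symm) hxy
  have hdc : ∀ a ∈ cs, ∀ b ≤ a, b ∈ cs := by
    intro a ha b hb
    rw [hmem] at ha ⊢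
    exact F.closed _ ha (c, b) le_rfl hb
  have hrange := downward_closed_eq_range cs hdc
  rw [← hmem r, hrange, Finset.mem_range, hcard]

lemma FerrersBoard.mem_iff_row {n : ℕ} (F : FerrersBoard n) (c r : ℕ) :
    (c, r) ∈ F.squares ↔ c < F.rowWidth r := by
  classical
  set cs : Finset ℕ := (F.squares.filter fun s => s.2 = r).image Prod.fst with hcs
  have hmem : ∀ c' : ℕ, c' ∈ cs ↔ (c', r) ∈ F.squares := by
    intro c'
    simp only [hcs, Finset.mem_image, Finset.mem_filter]
    constructor
    · rintro ⟨⟨c'', r'⟩, ⟨hm, rfl⟩, rfl⟩; exact hm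
    · intro h; exact ⟨(c', r), ⟨h, rfl⟩, rfl⟩
  have hcard : cs.card = F.rowWidth r := by
    rw [hcs]
    apply Finset.card_image_of_injOn
    intro x hx y hy hxy
    simp only [Finset.coe_filter, Set.mem_setOf_eq] at hx hy
    exact Prod.ext hxy (hx.2.trans hy.2.symm)
  have hdc : ∀ a ∈ cs, ∀ b ≤ a, b ∈ cs := by
    intro a ha b hb
    rw [hmem] at ha ⊢
    exact F.closed _ ha (b, r) hb le_rfl
  have hrange := downward_closed_eq_range cs hdc
  rw [← hmem c, hrange, Finset.mem_range, hcard]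

lemma FerrersBoard.colHeight_antitone {n : ℕ} (F : FerrersBoard n) {c c' : ℕ}
    (h : c ≤ c') : F.colHeight c' ≤ F.colHeight c := by
  by_contra hc
  push_neg at hc
  have h1 : (c', F.colHeight c) ∈ F.squares := (F.mem_iff_col _ _).mpr hc
  have h2 : (c, F.colHeight c) ∈ F.squares := F.closed _ h1 (c, F.colHeight c) h le_rfl
  exact absurd ((F.mem_iff_col _ _).mp h2) (lt_irrefl _)

lemma FerrersBoard.colHeight_le_height {n : ℕ} (F : FerrersBoard n) (c : ℕ) :
    F.colHeight c ≤ F.height := F.colHeight_antitone (Nat.zero_le c)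

/-- Every nonempty column `c < F.width` of a full placement contains a marker,
hence the number of markers in columns `< a` is exactly `a`. -/
lemma card_filter_col_lt {n : ℕ} (F : FerrersBoard n) (P : Finset Square)
    (hP : IsFullPlacement F P) {a : ℕ} (ha : a ≤ F.width) :
    (P.filter fun s => s.1 < a).card = a := by
  classical
  have hinj : Set.InjOn Prod.fst ((P.filter fun s => s.1 < a : Finset Square) : Set Square) := by
    intro x hx y hy hxy
    simp only [Finset.coe_filter, Set.mem_setOf_eq] at hx hy
    exact hP.1.2.1 x hx.1 y hy.1 hxy
  have himg : (P.filter fun s => s.1 < a).image Prod.fst = Finset.range a := by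
    apply Finset.Subset.antisymm
    · intro c hc
      obtain ⟨x, hx, rfl⟩ := Finset.mem_image.mp hc
      exact Finset.mem_range.mpr (Finset.mem_filter.mp hx).2
    · intro c hc
      have hc' : c < a := Finset.mem_range.mp hc
      have hsq : (c, 0) ∈ F.squares := by
        rw [F.mem_iff_row]
        exact lt_of_lt_of_le hc' ha
      obtain ⟨r, hr⟩ := (hP.2 (c, 0) hsq).1
      exact Finset.mem_image.mpr ⟨(c, r), Finset.mem_filter.mpr ⟨hr, hc'⟩, rfl⟩
  rw [← Finset.card_image_of_injOn hinj, himg, Finset.card_range]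

lemma card_filter_row_lt {n : ℕ} (F : FerrersBoard n) (P : Finset Square)
    (hP : IsFullPlacement F P) {b : ℕ} (hb : b ≤ F.height) :
    (P.filter fun s => s.2 < b).card = b := by
  classical
  have hinj : Set.InjOn Prod.snd ((P.filter fun s => s.2 < b : Finset Square) : Set Square) := by
    intro x hx y hy hxy
    simp only [Finset.coe_filter, Set.mem_setOf_eq] at hx hy
    exact hP.1.2.2 x hx.1 y hy.1 hxy
  have himg : (P.filter fun s => s.2 < b).image Prod.snd = Finset.range b := by
    apply Finset.Subset.antisymm
    · intro r hr
      obtain ⟨x, hx, rfl⟩ := Finset.mem_image.mp hr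
      exact Finset.mem_range.mpr (Finset.mem_filter.mp hx).2
    · intro r hr
      have hr' : r < b := Finset.mem_range.mp hr
      have hsq : (0, r) ∈ F.squares := by
        rw [F.mem_iff_col]
        exact lt_of_lt_of_le hr' hb
      obtain ⟨c, hc⟩ := (hP.2 (0, r) hsq).2
      exact Finset.mem_image.mpr ⟨(c, r), Finset.mem_filter.mpr ⟨hc, hr'⟩, rfl⟩
  rw [← Finset.card_image_of_injOn hinj, himg, Finset.card_range]

lemma card_full_placement {n : ℕ} (F : FerrersBoard n) (P : Finset Square)
    (hP : IsFullPlacement F P) : P.card = F.height := by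
  classical
  have hfil : P.filter (fun s => s.2 < F.height) = P := by
    apply Finset.filter_true_of_mem
    intro s hs
    have hsF : s ∈ F.squares := hP.1.1 hs
    have : s.2 < F.colHeight s.1 := by
      have := (F.mem_iff_col s.1 s.2).mp (by simpa using hsF)
      exact this
    exact lt_of_lt_of_le this (F.colHeight_le_height s.1)
  rw [← hfil, card_filter_row_lt F P hP le_rfl]

/-- The key counting formula: for a border vertex `V = (a, b)`,
any full placement has exactly `a + b - height` markers in `R(V)`. -/
lemma card_inter_RV_add_height {n : ℕ} (F : FerrersBoard n) (P : Finset Square)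
    (hP : IsFullPlacement F P) (V : ℕ × ℕ) (hV : F.IsBorderVertex V) :
    (P ∩ RV V).card + F.height = V.1 + V.2 := by
  classical
  obtain ⟨ha, hcb, hbc⟩ := hV
  have hb : V.2 ≤ F.height := le_trans hbc (F.colHeight_le_height _)
  -- markers with row ≥ b have column < a
  have hkey : ∀ s ∈ P, ¬ s.2 < V.2 → s.1 < V.1 := by
    intro s hs hrow
    by_contra hcol
    push_neg at hcol hrow
    have hsF : s ∈ F.squares := hP.1.1 hs
    have h1 : (V.1, s.2) ∈ F.squares := F.closed s hsF (V.1, s.2) hcol le_rfl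
    have h2 : s.2 < F.colHeight V.1 := (F.mem_iff_col _ _).mp h1
    omega
  have hinter : P ∩ RV V = P.filter (fun s => s.1 < V.1 ∧ s.2 < V.2) := by
    ext s
    simp [RV, Finset.mem_inter, Finset.mem_product, Finset.mem_filter, and_assoc]
  have e1 : (P.filter fun s => s.1 < V.1).card = V.1 :=
    card_filter_col_lt F P hP ha
  have e2 : ((P.filter fun s => s.1 < V.1).filter fun s => s.2 < V.2).card +
      ((P.filter fun s => s.1 < V.1).filter fun s => ¬ s.2 < V.2).card =
      (P.filter fun s => s.1 < V.1).card :=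
    Finset.card_filter_add_card_filter_not _
  have e3 : (P.filter fun s => s.1 < V.1).filter (fun s => ¬ s.2 < V.2) =
      P.filter (fun s => ¬ s.2 < V.2) := by
    rw [Finset.filter_filter]
    apply Finset.filter_congr
    intro s hs
    constructor
    · exact fun h => h.2
    · exact fun h => ⟨hkey s hs h, h⟩
  have e4 : (P.filter fun s => s.2 < V.2).card +
      (P.filter fun s => ¬ s.2 < V.2).card = P.card :=
    Finset.card_filter_add_card_filter_not _
  have e5 : (P.filter fun s => s.2 < V.2).card = V.2 :=
    card_filter_row_lt F P hP hb
  have e6 : P.card = F.height := card_full_placement F P hP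
  have e7 : ((P.filter fun s => s.1 < V.1).filter fun s => s.2 < V.2) =
      P.filter (fun s => s.1 < V.1 ∧ s.2 < V.2) := by
    rw [Finset.filter_filter]
  rw [e3] at e2
  rw [hinter, ← e7]
  omega

/-- The defining set of `maxIncSeq` is bounded above by the cardinality. -/
lemma maxIncSet_bddAbove (M : Finset Square) :
    M.card ∈ upperBounds {k : ℕ | ∃ f : Fin k → Square, (∀ i, f i ∈ M) ∧
      ∀ i j : Fin k, i < j → (f i).1 < (f j).1 ∧ (f i).2 < (f j).2} := by
  rintro k ⟨f, hfM, hf⟩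
  have hinj : Function.Injective f := by
    intro i j hij
    by_contra hne
    rcases Ne.lt_or_gt hne with h | h
    · exact absurd (congrArg Prod.fst hij) (Nat.ne_of_lt (hf i j h).1)
    · exact absurd (congrArg Prod.fst hij) (Nat.ne_of_gt (hf j i h).1)
  calc k = (Finset.univ.image f).card := by
        rw [Finset.card_image_of_injective _ hinj, Finset.card_univ, Fintype.card_fin]
    _ ≤ M.card := Finset.card_le_card (fun x hx => by
        obtain ⟨i, -, rfl⟩ := Finset.mem_image.mp hx
        exact hfM i)

lemma maxIncSeq_le_card (M : Finset Square) : maxIncSeq M ≤ M.card := by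
  unfold maxIncSeq
  exact csSup_le' (maxIncSet_bddAbove M)

lemma one_le_maxIncSeq (M : Finset Square) (h : M.Nonempty) : 1 ≤ maxIncSeq M := by
  obtain ⟨m, hm⟩ := h
  unfold maxIncSeq
  apply le_csSup ⟨M.card, maxIncSet_bddAbove M⟩
  refine ⟨fun _ => m, fun _ => hm, fun i j hij => absurd hij ?_⟩
  have : i = j := Subsingleton.elim i j
  simp [this]

end AuxLemmas

/-- Lemma 2, 312 case.  Let `P` be a full rook placement on a
Ferrers board `F`, let `S = S(P,F)`, and let `N = N(F,·)` count the markers that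
any full rook placement on `F` has in `R(V)`.  If `(F, S)` satisfies the
312-conditions then `(F, S⁺)` satisfies the 231-conditions. -/
theorem plusSeq_conditions231_of_conditions312 {n : ℕ} (F : FerrersBoard n)
    (P : Finset Square) (hP : IsFullPlacement F P) (N : ℕ × ℕ → ℕ)
    (hN : ∀ Q : Finset Square, IsFullPlacement F Q →
      ∀ V : ℕ × ℕ, F.IsBorderVertex V → (Q ∩ RV V).card = N V)
    (h312 : Conditions312 F (SPV P)) :
    Conditions231 F (plusSeq N (SPV P)) := by
  obtain ⟨hmono, h0a, h0b, h0c, hdiag⟩ := h312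
  have hNcard : ∀ V : ℕ × ℕ, F.IsBorderVertex V → N V = (P ∩ RV V).card :=
    fun V hV => (hN P hP V hV).symm
  have hNform : ∀ V : ℕ × ℕ, F.IsBorderVertex V → N V + F.height = V.1 + V.2 := by
    intro V hV
    rw [hNcard V hV]
    exact card_inter_RV_add_height F P hP V hV
  have hSle : ∀ V : ℕ × ℕ, F.IsBorderVertex V → SPV P V ≤ N V := by
    intro V hV
    rw [hNcard V hV]
    exact maxIncSeq_le_card _
  have hS0 : ∀ V : ℕ × ℕ, F.IsBorderVertex V → SPV P V = 0 → N V = 0 := by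
    intro V hV h
    rw [hNcard V hV]
    by_contra hc
    have hne : (P ∩ RV V).Nonempty := Finset.card_pos.mp (Nat.pos_of_ne_zero hc)
    have := one_le_maxIncSeq _ hne
    rw [show maxIncSeq (P ∩ RV V) = SPV P V from rfl, h] at this
    omega
  refine ⟨?_, ?_, ?_, ?_, ?_⟩
  · -- monotonicity
    intro V1 V2 hV1 hV2 hadj
    obtain ⟨hst, hts⟩ := hmono V1 V2 hV1 hV2 hadj
    have hN1 := hNform V1 hV1
    have hN2 := hNform V2 hV2
    have hsum : V2.1 + V2.2 = V1.1 + V1.2 + 1 := by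
      rcases hadj with ⟨h1, h2⟩ | ⟨h1, h2⟩ <;> omega
    have hle1 := hSle V1 hV1
    have hle2 := hSle V2 hV2
    by_cases h1 : SPV P V1 = 0
    · by_cases h2 : SPV P V2 = 0
      · simp [plusSeq, h1, h2]
      · have hn1 := hS0 V1 hV1 h1
        simp only [plusSeq, h1, h2, if_true, if_false, ite_true, ite_false]
        omega
    · have h2 : SPV P V2 ≠ 0 := by
        intro h
        rw [h] at hst
        exact h1 (Nat.le_zero.mp hst)
      simp only [plusSeq, h1, h2, ite_false, if_neg h1, if_neg h2]
      omega
  · simp [plusSeq, h0a]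
  · simp [plusSeq, h0b]
  · -- no two consecutive zeros
    intro V1 V2 hV1 hV2 hadj hz
    have key : ∀ V : ℕ × ℕ, F.IsBorderVertex V → plusSeq N (SPV P) V = 0 →
        SPV P V = 0 := by
      intro V hV h
      by_contra hc
      have hle := hSle V hV
      simp only [plusSeq, hc, ite_false, if_neg hc] at h
      omega
    exact h0c V1 V2 hV1 hV2 hadj ⟨key V1 hV1 hz.1, key V2 hV2 hz.2⟩
  · -- diagonal condition
    intro V1 V2 hd
    have hSd := hdiag V1 V2 hd
    obtain ⟨hb1, hb2, k, hk1, hk2, -⟩ := hd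
    have hN1 := hNform V1 hb1
    have hN2 := hNform V2 hb2
    have hNeq : N V1 = N V2 := by omega
    by_cases h1 : SPV P V1 = 0
    · simp [plusSeq, h1]
    · have h2 : SPV P V2 ≠ 0 := by
        intro h
        have hn2 := hS0 V2 hb2 h
        have hle1 := hSle V1 hb1
        omega
      simp only [plusSeq, h1, h2, ite_false, if_neg h1, if_neg h2]
      omega
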